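/- arXiv:1307.6447 — 2 statements merged into one kernel-verified Lean document; each statement's English description precedes it below -/
import Mathlib

section
/- Let g be a real Lie algebra with an ad-invariant inner product, let σ ∈ g be a unit vector, and let a ∈ V ⊗ g where V is a 4-dimensional real inner product space. Write a = ν ⊗ σ + 𝔞 where ν ∈ V is defined by ν = ⟨σ, a⟩ componentwise and ⟨σ, 𝔞⟩ = 0 componentwise. If moreover the V-inner-product pairing of ν with each g-component of 𝔞 vanishes and g = su(2) with the inner product ⟨x,y⟩ = -½ trace(xy), then |a ∧ a|^2 = 4|ν|^2|𝔞|^2 + |𝔞 ∧ 𝔞|^2, where a ∧ a denotes the Λ^2 V ⊗ g element with components [a_α, a_β]. -/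
open Matrix

/-- The ad-invariant inner product `⟨x,y⟩ = -½ trace (x y)` on `su(2)`,
realized on 2×2 complex matrices. -/
noncomputable def su2ip (x y : Matrix (Fin 2) (Fin 2) ℂ) : ℝ :=
  (-(1 / 2 : ℂ) * (x * y).trace).re

private lemma key_trace (x y z w : Matrix (Fin 2) (Fin 2) ℂ) (hx : x.trace = 0)
    (hy : y.trace = 0) (hz : z.trace = 0) (hw : w.trace = 0) :
    ((x*y - y*x) * (z*w - w*z)).trace
      = 2*((x*w).trace*(y*z).trace - (x*z).trace*(y*w).trace) := by
  rw [Matrix.trace_fin_two] at hx hy hz hw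
  have hx' : x 1 1 = -x 0 0 := by linear_combination hx
  have hy' : y 1 1 = -y 0 0 := by linear_combination hy
  have hz' : z 1 1 = -z 0 0 := by linear_combination hz
  have hw' : w 1 1 = -w 0 0 := by linear_combination hw
  simp only [Matrix.trace_fin_two, Matrix.sub_apply, Matrix.mul_apply, Fin.sum_univ_two,
    hx', hy', hz', hw']
  ring

private lemma re_neg_half (r : ℝ) : (-(1 / 2 : ℂ) * (r : ℂ)).re = -(1/2) * r := by
  have h : (-(1 / 2 : ℂ) * (r : ℂ)) = ((-(1/2) * r : ℝ) : ℂ) := by push_cast; ring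
  rw [h, Complex.ofReal_re]

private lemma trace_mul_real (x y : Matrix (Fin 2) (Fin 2) ℂ)
    (hx : xᴴ = -x) (hy : yᴴ = -y) :
    (x*y).trace = (((x*y).trace.re : ℝ) : ℂ) := by
  have h : (starRingEnd ℂ) (x*y).trace = (x*y).trace := by
    have := Matrix.trace_conjTranspose (x*y)
    rw [Matrix.conjTranspose_mul, hx, hy] at this
    simpa [Matrix.trace_mul_comm y x] using this.symm
  exact ((Complex.conj_eq_iff_re).mp h).symm

/-- The pointwise algebraic identity (fourth bullet of (4.5)): if an `su(2)`-valued
1-form `a` on a 4-dimensional inner product space is decomposed as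
`a = ν ⊗ σ + 𝔞` relative to a unit element `σ ∈ su(2)`, with `⟨σ, 𝔞_α⟩ = 0`
and `Σ_α ν_α 𝔞_α = 0`, then `|a ∧ a|² = 4|ν|²|𝔞|² + |𝔞 ∧ 𝔞|²`, where
`(a ∧ a)_{αβ} = [a_α, a_β]` and `|ω|² = ½ Σ_{α,β} |ω_{αβ}|²` for 2-forms. -/
theorem su2_wedge_norm_split (σ : Matrix (Fin 2) (Fin 2) ℂ)
    (a : Fin 4 → Matrix (Fin 2) (Fin 2) ℂ)
    (hσskew : σᴴ = -σ) (hσtr : σ.trace = 0) (hσunit : su2ip σ σ = 1)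
    (haskew : ∀ α, (a α)ᴴ = -(a α)) (hatr : ∀ α, (a α).trace = 0)
    (ν : Fin 4 → ℝ) (𝔞 : Fin 4 → Matrix (Fin 2) (Fin 2) ℂ)
    (hν : ∀ α, ν α = su2ip σ (a α))
    (h𝔞 : ∀ α, 𝔞 α = a α - ν α • σ)
    (horth : ∑ α, ν α • 𝔞 α = 0) :
    (1 / 2 : ℝ) * ∑ α, ∑ β, su2ip ⁅a α, a β⁆ ⁅a α, a β⁆ =
      4 * (∑ α, ν α ^ 2) * (∑ α, su2ip (𝔞 α) (𝔞 α)) +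
        (1 / 2 : ℝ) * ∑ α, ∑ β, su2ip ⁅𝔞 α, 𝔞 β⁆ ⁅𝔞 α, 𝔞 β⁆ := by
  -- basic facts about 𝔞
  have h𝔞tr : ∀ α, (𝔞 α).trace = 0 := by
    intro α
    rw [h𝔞, Matrix.trace_sub, Matrix.trace_smul, hatr, hσtr]
    simp
  have h𝔞skew : ∀ α, (𝔞 α)ᴴ = -(𝔞 α) := by
    intro α
    rw [h𝔞, Matrix.conjTranspose_sub, Matrix.conjTranspose_smul, haskew, hσskew]
    simp
    module
  -- trace σ² = -2
  have hσσreal := trace_mul_real σ σ hσskew hσskew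
  have hσσ : (σ * σ).trace = ((-2 : ℝ) : ℂ) := by
    have h1 : (-(1 / 2 : ℂ) * (σ * σ).trace).re = 1 := hσunit
    rw [hσσreal, re_neg_half] at h1
    have h2 : (σ * σ).trace.re = -2 := by linarith
    rw [hσσreal, h2]
  -- trace (σ * a α) = -2 ν α
  have hσa : ∀ α, (σ * a α).trace = ((-2 * ν α : ℝ) : ℂ) := by
    intro α
    have hreal := trace_mul_real σ (a α) hσskew (haskew α)
    have hval : ν α = (-(1 / 2 : ℂ) * (σ * a α).trace).re := hν α
    rw [hreal, re_neg_half] at hval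
    have h2 : (σ * a α).trace.re = -2 * ν α := by linarith
    rw [hreal, h2]
  -- trace (σ * 𝔞 α) = 0
  have hσ𝔞 : ∀ α, (σ * 𝔞 α).trace = 0 := by
    intro α
    rw [h𝔞, Matrix.mul_sub, Matrix.trace_sub, mul_smul_comm, Matrix.trace_smul, hσa, hσσ]
    push_cast [Complex.real_smul]
    ring
  have h𝔞σ : ∀ α, (𝔞 α * σ).trace = 0 := by
    intro α
    rw [Matrix.trace_mul_comm]
    exact hσ𝔞 α
  -- real components of traces
  set r : Fin 4 → Fin 4 → ℝ := fun α β => ((𝔞 α * 𝔞 β).trace).re with hrdef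
  have hr : ∀ α β, (𝔞 α * 𝔞 β).trace = ((r α β : ℝ) : ℂ) := fun α β =>
    trace_mul_real (𝔞 α) (𝔞 β) (h𝔞skew α) (h𝔞skew β)
  -- trace (a α * a β)
  have hS : ∀ α β, (a α * a β).trace = ((-2 * ν α * ν β + r α β : ℝ) : ℂ) := by
    intro α β
    have ha : ∀ γ, a γ = ν γ • σ + 𝔞 γ := by intro γ; rw [h𝔞]; module
    rw [ha α, ha β]
    rw [Matrix.add_mul, Matrix.mul_add, Matrix.mul_add, Matrix.trace_add, Matrix.trace_add,
      Matrix.trace_add, smul_mul_assoc, smul_mul_assoc, mul_smul_comm, mul_smul_comm,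
      Matrix.trace_smul, Matrix.trace_smul, Matrix.trace_smul, Matrix.trace_smul,
      hσσ, hσ𝔞 β, h𝔞σ α, hr α β]
    push_cast [Complex.real_smul, smul_zero]
    ring
  -- pointwise bracket norms
  have hbr_a : ∀ α β, su2ip ⁅a α, a β⁆ ⁅a α, a β⁆ =
      (-2 * ν α * ν α + r α α) * (-2 * ν β * ν β + r β β)
        - (-2 * ν α * ν β + r α β) ^ 2 := by
    intro α β
    rw [su2ip, Ring.lie_def,
      key_trace (a α) (a β) (a α) (a β) (hatr α) (hatr β) (hatr α) (hatr β),
      Matrix.trace_mul_comm (a β) (a α), hS α α, hS β β, hS α β]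
    have h : (-(1 / 2 : ℂ)) * (2 * (((-2 * ν α * ν β + r α β : ℝ) : ℂ) *
        ((-2 * ν α * ν β + r α β : ℝ) : ℂ) -
        ((-2 * ν α * ν α + r α α : ℝ) : ℂ) * ((-2 * ν β * ν β + r β β : ℝ) : ℂ)))
        = (((-2 * ν α * ν α + r α α) * (-2 * ν β * ν β + r β β)
          - (-2 * ν α * ν β + r α β) ^ 2 : ℝ) : ℂ) := by
      push_cast; ring
    rw [h, Complex.ofReal_re]
  have hbr_𝔞 : ∀ α β, su2ip ⁅𝔞 α, 𝔞 β⁆ ⁅𝔞 α, 𝔞 β⁆ =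
      r α α * r β β - r α β ^ 2 := by
    intro α β
    rw [su2ip, Ring.lie_def,
      key_trace (𝔞 α) (𝔞 β) (𝔞 α) (𝔞 β) (h𝔞tr α) (h𝔞tr β) (h𝔞tr α) (h𝔞tr β),
      Matrix.trace_mul_comm (𝔞 β) (𝔞 α), hr α α, hr β β, hr α β]
    have h : (-(1 / 2 : ℂ)) * (2 * (((r α β : ℝ) : ℂ) * ((r α β : ℝ) : ℂ) -
        ((r α α : ℝ) : ℂ) * ((r β β : ℝ) : ℂ)))
        = ((r α α * r β β - r α β ^ 2 : ℝ) : ℂ) := by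
      push_cast; ring
    rw [h, Complex.ofReal_re]
  have hip_𝔞 : ∀ α, su2ip (𝔞 α) (𝔞 α) = -(1/2) * r α α := by
    intro α
    rw [su2ip, hr α α, re_neg_half]
  -- orthogonality consequence
  have hv : ∀ α, ∑ β, ν β * r α β = 0 := by
    intro α
    have h0 : (𝔞 α * (∑ β, ν β • 𝔞 β)).trace = 0 := by rw [horth]; simp
    rw [Finset.mul_sum] at h0
    simp only [mul_smul_comm, Matrix.trace_sum, Matrix.trace_smul] at h0
    have h1 : ((∑ β, ν β * r α β : ℝ) : ℂ) = 0 := by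
      rw [← h0]
      push_cast
      refine Finset.sum_congr rfl fun β _ => ?_
      rw [hr α β, Complex.real_smul]
    exact_mod_cast h1
  -- finish
  simp only [hbr_a, hbr_𝔞, hip_𝔞]
  have h0 := hv 0
  have h1 := hv 1
  have h2 := hv 2
  have h3 := hv 3
  rw [Fin.sum_univ_four] at h0 h1 h2 h3
  simp only [Fin.sum_univ_four]
  linear_combination (2 * ν 0) * h0 + (2 * ν 1) * h1 + (2 * ν 2) * h2 + (2 * ν 3) * h3
end

section
/- Let B' ⊂ B ⊂ R^n be concentric balls, with B of radius r and B' of radius r/2, Z ⊂ B a closed set, and v a bounded function on B, smooth on B \ Z, satisfying: (i) there are constants c_* and exponent α ∈ (0,1] such that |v(p) - v(q)| ≤ c_* δ^{-3} dist(p,q)^{1/4} whenever p, q ∈ B' both have distance ≥ 2δ from Z (for every δ ∈ (0, δ_0]); and (ii) |v(p)| ≤ c_0 dist(p, Z)^ν for p with dist(p, Z) < δ_0, where ν > 0. Then v is Hölder continuous on B' with exponent min(1/16, ν/16): |v(p) - v(q)| ≤ C dist(p,q)^{min(1/16, ν/16)} for all p, q ∈ B'. -/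
open Metric Set

/-- The interpolation argument of Proposition 8.1 (Part 2): combining interior
Hölder estimates away from a closed set `Z` (with constant blowing up like
`δ⁻³`) with polynomial vanishing `|v| ≤ c₀ dist(·,Z)^ν` near `Z` yields global
Hölder continuity on the half-sized concentric ball, with exponent
`min(1/16, ν/16)`. -/
theorem holder_interpolation (n : ℕ) (p0 : EuclideanSpace ℝ (Fin n)) (r : ℝ)
    (hr : 0 < r) (Z : Set (EuclideanSpace ℝ (Fin n))) (hZcl : IsClosed Z)
    (hZB : Z ⊆ ball p0 r)
    (v : EuclideanSpace ℝ (Fin n) → ℝ) (Mv cstar c0 ν δ0 : ℝ)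
    (hδ0 : 0 < δ0) (hν : 0 < ν) (hcstar : 0 < cstar) (hc0 : 0 < c0)
    (hbdd : ∀ x ∈ ball p0 r, |v x| ≤ Mv)
    (hsm : ContDiffOn ℝ (⊤ : ℕ∞) v (ball p0 r \ Z))
    (hi : ∀ δ ∈ Ioc (0:ℝ) δ0, ∀ p ∈ ball p0 (r / 2), ∀ q ∈ ball p0 (r / 2),
      2 * δ ≤ infDist p Z → 2 * δ ≤ infDist q Z →
      |v p - v q| ≤ cstar * δ ^ (-(3:ℝ)) * dist p q ^ ((1:ℝ) / 4))
    (hii : ∀ p ∈ ball p0 r, infDist p Z < δ0 →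
      |v p| ≤ c0 * infDist p Z ^ ν) :
    ∃ C : ℝ, ∀ p ∈ ball p0 (r / 2), ∀ q ∈ ball p0 (r / 2),
      |v p - v q| ≤ C * dist p q ^ min ((1:ℝ) / 16) (ν / 16) := by
  have hr2 : 0 < r / 2 := by positivity
  have hMv : 0 ≤ Mv := le_trans (abs_nonneg _) (hbdd p0 (mem_ball_self hr))
  set β : ℝ := min ((1:ℝ)/16) (ν/16) with hβdef
  have hβpos : 0 < β := lt_min (by norm_num) (by positivity)
  have hβ16 : β ≤ 1/16 := min_le_left _ _
  have hβν : β ≤ ν/16 := min_le_right _ _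
  set R : ℝ := max 1 r with hRdef
  have hR1 : (1:ℝ) ≤ R := le_max_left _ _
  have hRpos : 0 < R := lt_of_lt_of_le one_pos hR1
  set K : ℝ := R ^ (ν + 1) with hKdef
  have hKpos : 0 < K := Real.rpow_pos_of_pos hRpos _
  -- basic power interpolation helper
  have hpow : ∀ e : ℝ, β ≤ e → e ≤ ν + 1 → ∀ D : ℝ, 0 < D → D ≤ R →
      D ^ e ≤ K * D ^ β := by
    intro e hβe heν D hD0 hDR
    have h1 : D ^ e = D ^ (e - β) * D ^ β := by
      rw [← Real.rpow_add hD0]; ring_nf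
    rw [h1]
    have h2 : D ^ (e - β) ≤ K := by
      calc D ^ (e - β) ≤ R ^ (e - β) :=
            Real.rpow_le_rpow hD0.le hDR (by linarith)
        _ ≤ R ^ (ν + 1) :=
            Real.rpow_le_rpow_of_exponent_le hR1 (by linarith [hβpos.le])
      
    exact mul_le_mul_of_nonneg_right h2 (Real.rpow_nonneg hD0.le _)
  set d0 : ℝ := min (δ0/2) ((δ0/2)^(16:ℕ)) with hd0def
  have hd0pos : 0 < d0 := lt_min (by positivity) (by positivity)
  set d1 : ℝ := min d0 1 with hd1def
  have hd1pos : 0 < d1 := lt_min hd0pos one_pos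
  have hd1β : 0 < d1 ^ β := Real.rpow_pos_of_pos hd1pos _
  have hδ3 : 0 ≤ δ0 ^ (-(3:ℝ)) := (Real.rpow_pos_of_pos hδ0 _).le
  have h1R : (0:ℝ) ≤ (1+R) ^ ν := (Real.rpow_pos_of_pos (by linarith) _).le
  set CA : ℝ := 8 * cstar * (1 + δ0 ^ (-(3:ℝ))) * K with hCAdef
  set CB1 : ℝ := c0 * K + c0 * (1 + R) ^ ν * K with hCB1def
  set CB2 : ℝ := 2 * Mv / d1 ^ β with hCB2def
  have hCA : 0 ≤ CA := by
    rw [hCAdef]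
    have : (0:ℝ) ≤ 1 + δ0 ^ (-(3:ℝ)) := by linarith
    positivity
  have hCB1 : 0 ≤ CB1 := by
    rw [hCB1def]
    have h1 : 0 ≤ c0 * K := by positivity
    have h2 : 0 ≤ c0 * (1+R)^ν * K := by positivity
    linarith
  have hCB2 : 0 ≤ CB2 := by
    rw [hCB2def]
    positivity
  -- distance bound on the half ball
  have hdistR : ∀ a ∈ ball p0 (r/2), ∀ b ∈ ball p0 (r/2), dist a b ≤ R := by
    intro a ha b hb
    have ha' := mem_ball.mp ha
    have hb' := mem_ball.mp hb
    calc dist a b ≤ dist a p0 + dist b p0 := dist_triangle_right _ _ _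
      _ ≤ r := by linarith
      _ ≤ R := le_max_right _ _
  -- Key lemma: the case where `a` is close to `Z`
  have key : ∀ a ∈ ball p0 (r/2), ∀ b ∈ ball p0 (r/2),
      infDist a Z < min (dist a b ^ ((1:ℝ)/16)) δ0 →
      |v a - v b| ≤ (CB1 + CB2) * dist a b ^ β := by
    intro a ha b hb hcl
    have har : a ∈ ball p0 r := ball_subset_ball (by linarith) ha
    have hbr : b ∈ ball p0 r := ball_subset_ball (by linarith) hb
    have hDR : dist a b ≤ R := hdistR a ha b hb
    have hD0 : 0 < dist a b := by
      rcases (dist_nonneg : (0:ℝ) ≤ dist a b).eq_or_lt with h | h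
      · exfalso
        rw [← h, Real.zero_rpow (by norm_num : ((1:ℝ)/16) ≠ 0)] at hcl
        have h1 : infDist a Z < 0 := lt_of_lt_of_le hcl (min_le_left _ _)
        exact absurd h1 (not_lt.mpr infDist_nonneg)
      · exact h
    have hDnn : (0:ℝ) ≤ dist a b := hD0.le
    have hDν : (dist a b ^ ((1:ℝ)/16)) ^ ν = dist a b ^ (ν/16) := by
      rw [← Real.rpow_mul hDnn]
      congr 1
      ring
    have haZδ : infDist a Z < δ0 := lt_of_lt_of_le hcl (min_le_right _ _)
    have haZD : infDist a Z ≤ dist a b ^ ((1:ℝ)/16) :=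
      le_of_lt (lt_of_lt_of_le hcl (min_le_left _ _))
    have hva : |v a| ≤ c0 * K * dist a b ^ β := by
      calc |v a| ≤ c0 * infDist a Z ^ ν := hii a har haZδ
        _ ≤ c0 * (dist a b ^ ((1:ℝ)/16)) ^ ν :=
            mul_le_mul_of_nonneg_left
              (Real.rpow_le_rpow infDist_nonneg haZD hν.le) hc0.le
        _ = c0 * dist a b ^ (ν/16) := by rw [hDν]
        _ ≤ c0 * (K * dist a b ^ β) :=
            mul_le_mul_of_nonneg_left
              (hpow (ν/16) hβν (by linarith) _ hD0 hDR) hc0.le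
        _ = c0 * K * dist a b ^ β := by ring
    have hbZa : infDist b Z ≤ infDist a Z + dist a b := by
      have := infDist_le_infDist_add_dist (x := b) (y := a) (s := Z)
      rwa [dist_comm] at this
    by_cases hbZ : infDist b Z < δ0
    · -- both vanish polynomially
      have h2 : dist a b ≤ R * dist a b ^ ((1:ℝ)/16) := by
        have h15 : dist a b ^ ((15:ℝ)/16) ≤ R := by
          calc dist a b ^ ((15:ℝ)/16) ≤ R ^ ((15:ℝ)/16) :=
                Real.rpow_le_rpow hDnn hDR (by norm_num)
            _ ≤ R ^ (1:ℝ) :=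
                Real.rpow_le_rpow_of_exponent_le hR1 (by norm_num)
            _ = R := Real.rpow_one R
        calc dist a b = dist a b ^ ((15:ℝ)/16) * dist a b ^ ((1:ℝ)/16) := by
              rw [← Real.rpow_add hD0]; norm_num
          _ ≤ R * dist a b ^ ((1:ℝ)/16) :=
              mul_le_mul_of_nonneg_right h15 (Real.rpow_nonneg hDnn _)
      have hbD : infDist b Z ≤ (1 + R) * dist a b ^ ((1:ℝ)/16) := by
        have hx : (1 + R) * dist a b ^ ((1:ℝ)/16)
            = dist a b ^ ((1:ℝ)/16) + R * dist a b ^ ((1:ℝ)/16) := by ring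
        rw [hx]
        linarith
      have hvb : |v b| ≤ c0 * (1+R)^ν * K * dist a b ^ β := by
        calc |v b| ≤ c0 * infDist b Z ^ ν := hii b hbr hbZ
          _ ≤ c0 * ((1+R) * dist a b ^ ((1:ℝ)/16)) ^ ν :=
              mul_le_mul_of_nonneg_left
                (Real.rpow_le_rpow infDist_nonneg hbD hν.le) hc0.le
          _ = c0 * ((1+R)^ν * (dist a b ^ ((1:ℝ)/16)) ^ ν) := by
              rw [Real.mul_rpow (by linarith) (Real.rpow_nonneg hDnn _)]
          _ = c0 * (1+R)^ν * dist a b ^ (ν/16) := by rw [hDν]; ring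
          _ ≤ c0 * (1+R)^ν * (K * dist a b ^ β) :=
              mul_le_mul_of_nonneg_left
                (hpow (ν/16) hβν (by linarith) _ hD0 hDR)
                (by positivity)
          _ = c0 * (1+R)^ν * K * dist a b ^ β := by ring
      calc |v a - v b| ≤ |v a| + |v b| := abs_sub _ _
        _ ≤ c0 * K * dist a b ^ β + c0 * (1+R)^ν * K * dist a b ^ β :=
            add_le_add hva hvb
        _ = CB1 * dist a b ^ β := by rw [hCB1def]; ring
        _ ≤ (CB1 + CB2) * dist a b ^ β :=
            mul_le_mul_of_nonneg_right (by linarith) (Real.rpow_nonneg hDnn _)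
    · -- b is far from Z: the distance is bounded below
      push_neg at hbZ
      have hD1 : δ0 ≤ dist a b ^ ((1:ℝ)/16) + dist a b := by
        have := hbZa
        linarith
      have hd0D : d0 ≤ dist a b := by
        rcases le_or_gt (δ0/2) (dist a b ^ ((1:ℝ)/16)) with h | h
        · have h16 : (δ0/2)^(16:ℕ) ≤ dist a b := by
            calc (δ0/2)^(16:ℕ) ≤ (dist a b ^ ((1:ℝ)/16))^(16:ℕ) :=
                  pow_le_pow_left₀ (by positivity) h 16
              _ = dist a b := by
                  rw [← Real.rpow_natCast (dist a b ^ ((1:ℝ)/16)) 16,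
                    ← Real.rpow_mul hDnn]
                  norm_num
          exact le_trans (min_le_right _ _) h16
        · exact le_trans (min_le_left _ _) (by linarith)
      have hβD : d1 ^ β ≤ dist a b ^ β :=
        Real.rpow_le_rpow hd1pos.le
          (le_trans (min_le_left _ _) hd0D) hβpos.le
      calc |v a - v b| ≤ |v a| + |v b| := abs_sub _ _
        _ ≤ Mv + Mv := add_le_add (hbdd a har) (hbdd b hbr)
        _ = CB2 * d1 ^ β := by rw [hCB2def]; field_simp; ring
        _ ≤ CB2 * dist a b ^ β := mul_le_mul_of_nonneg_left hβD hCB2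
        _ ≤ (CB1 + CB2) * dist a b ^ β :=
            mul_le_mul_of_nonneg_right (by linarith) (Real.rpow_nonneg hDnn _)
  refine ⟨CA + CB1 + CB2, ?_⟩
  intro p hp q hq
  rcases (dist_nonneg : (0:ℝ) ≤ dist p q).eq_or_lt with h0 | hD0
  · have hpq : p = q := dist_eq_zero.mp h0.symm
    subst hpq
    rw [sub_self, abs_zero, dist_self, Real.zero_rpow hβpos.ne', mul_zero]
  · have hDR : dist p q ≤ R := hdistR p hp q hq
    have hDnn : (0:ℝ) ≤ dist p q := hD0.le
    have hmpos : 0 < min (dist p q ^ ((1:ℝ)/16)) δ0 :=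
      lt_min (Real.rpow_pos_of_pos hD0 _) hδ0
    by_cases hA : min (dist p q ^ ((1:ℝ)/16)) δ0 ≤ infDist p Z ∧
        min (dist p q ^ ((1:ℝ)/16)) δ0 ≤ infDist q Z
    · -- both points are far from Z: interior estimate
      have hmδ0 : min (dist p q ^ ((1:ℝ)/16)) δ0 ≤ δ0 := min_le_right _ _
      have hδmem : min (dist p q ^ ((1:ℝ)/16)) δ0 / 2 ∈ Ioc (0:ℝ) δ0 :=
        ⟨by linarith, by linarith⟩
      have hest := hi _ hδmem p hp q hq (by linarith [hA.1]) (by linarith [hA.2])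
      have hcube : ∀ x : ℝ, 0 < x → x ^ (-(3:ℝ)) = ((x^(3:ℕ)) : ℝ)⁻¹ := by
        intro x hx
        rw [Real.rpow_neg hx.le, show ((3:ℝ)) = ((3:ℕ):ℝ) by norm_num,
          Real.rpow_natCast]
      have e1 : (min (dist p q ^ ((1:ℝ)/16)) δ0 / 2) ^ (-(3:ℝ))
          = 8 * (min (dist p q ^ ((1:ℝ)/16)) δ0) ^ (-(3:ℝ)) := by
        rw [hcube _ (by linarith), hcube _ hmpos]
        rw [div_pow]
        rw [inv_div]
        norm_num
        rw [div_eq_mul_inv]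
      have e2 : (min (dist p q ^ ((1:ℝ)/16)) δ0) ^ (-(3:ℝ))
          ≤ dist p q ^ (-(3:ℝ)/16) + δ0 ^ (-(3:ℝ)) := by
        rcases min_cases (dist p q ^ ((1:ℝ)/16)) δ0 with ⟨hmin, _⟩ | ⟨hmin, _⟩
        · rw [hmin]
          have hx : (dist p q ^ ((1:ℝ)/16)) ^ (-(3:ℝ))
              = dist p q ^ (-(3:ℝ)/16) := by
            rw [← Real.rpow_mul hDnn]
            congr 1
            ring
          rw [hx]
          linarith
        · rw [hmin]
          have : (0:ℝ) ≤ dist p q ^ (-(3:ℝ)/16) :=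
            (Real.rpow_pos_of_pos hD0 _).le
          linarith
      have e4 : dist p q ^ (-(3:ℝ)/16) * dist p q ^ ((1:ℝ)/4)
          = dist p q ^ ((1:ℝ)/16) := by
        rw [← Real.rpow_add hD0]
        congr 1
        norm_num
      have g1 := hpow (1/16) hβ16 (by linarith) _ hD0 hDR
      have g2 := hpow (1/4) (by linarith) (by linarith) _ hD0 hDR
      calc |v p - v q|
          ≤ cstar * (min (dist p q ^ ((1:ℝ)/16)) δ0 / 2) ^ (-(3:ℝ))
            * dist p q ^ ((1:ℝ)/4) := hest
        _ = 8 * cstar * (min (dist p q ^ ((1:ℝ)/16)) δ0) ^ (-(3:ℝ))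
            * dist p q ^ ((1:ℝ)/4) := by rw [e1]; ring
        _ ≤ 8 * cstar * (dist p q ^ (-(3:ℝ)/16) + δ0 ^ (-(3:ℝ)))
            * dist p q ^ ((1:ℝ)/4) :=
            mul_le_mul_of_nonneg_right
              (mul_le_mul_of_nonneg_left e2 (by linarith))
              (Real.rpow_nonneg hDnn _)
        _ = 8 * cstar * (dist p q ^ ((1:ℝ)/16)
            + δ0 ^ (-(3:ℝ)) * dist p q ^ ((1:ℝ)/4)) := by rw [← e4]; ring
        _ ≤ 8 * cstar * (K * dist p q ^ β
            + δ0 ^ (-(3:ℝ)) * (K * dist p q ^ β)) := by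
            have := add_le_add g1 (mul_le_mul_of_nonneg_left g2 hδ3)
            exact mul_le_mul_of_nonneg_left this (by linarith)
        _ = CA * dist p q ^ β := by rw [hCAdef]; ring
        _ ≤ (CA + CB1 + CB2) * dist p q ^ β :=
            mul_le_mul_of_nonneg_right (by linarith) (Real.rpow_nonneg hDnn _)
    · rcases not_and_or.mp hA with h | h
      · push_neg at h
        calc |v p - v q| ≤ (CB1 + CB2) * dist p q ^ β := key p hp q hq h
          _ ≤ (CA + CB1 + CB2) * dist p q ^ β :=
              mul_le_mul_of_nonneg_right (by linarith) (Real.rpow_nonneg hDnn _)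
      · push_neg at h
        have h' : infDist q Z < min (dist q p ^ ((1:ℝ)/16)) δ0 := by
          rwa [dist_comm]
        have hk := key q hq p hp h'
        rw [dist_comm, abs_sub_comm] at hk
        calc |v p - v q| ≤ (CB1 + CB2) * dist p q ^ β := hk
          _ ≤ (CA + CB1 + CB2) * dist p q ^ β :=
              mul_le_mul_of_nonneg_right (by linarith) (Real.rpow_nonneg hDnn _)
end
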